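/- arXiv:2505.10374 — 3 statements merged into one kernel-verified Lean document; each statement's English description precedes it below -/
import Mathlib

section
/- The object S_{−∞,∞} of S (the sequence that is k in every degree, with transition maps (−1)^i·id_k) is not a projective object of S. -/
open CategoryTheory CategoryTheory.Limits

set_option linter.unusedVariables false

/-- The category `S` of sequences of `k`-vector spaces: functors from `ℤ`
(viewed as a poset category) to `k`-vector spaces. -/
abbrev SeqCat (k : Type) [Field k] := ℤ ⥤ ModuleCat k

variable {k : Type} [Field k]

/-- The transition map `d_V^i : V^i ⟶ V^{i+1}` of a sequence `V`. -/
noncomputable def SeqCat.d (V : SeqCat k) (i : ℤ) : V.obj i ⟶ V.obj (i + 1) :=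
  V.map (homOfLE (by omega))

variable (k)

/-- The component in degree `i` of the sequence `S_{a,b}` (for `a ∈ ℤ ∪ {−∞}`,
`b ∈ ℤ ∪ {∞}`), as a submodule of `k`: it is all of `k` if `a ≤ i ≤ b` and `0`
otherwise. -/
noncomputable def SabObj (a : WithBot ℤ) (b : WithTop ℤ) (i : ℤ) : Submodule k k :=
  if a ≤ (i : WithBot ℤ) ∧ (i : WithTop ℤ) ≤ b then ⊤ else ⊥

lemma SabObj_coe_eq_zero {a : WithBot ℤ} {b : WithTop ℤ} {i : ℤ}
    (h : ¬ (a ≤ (i : WithBot ℤ) ∧ (i : WithTop ℤ) ≤ b)) (x : ↥(SabObj k a b i)) :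
    (x : k) = 0 := by
  have hm := x.2
  have he : SabObj k a b i = ⊥ := if_neg h
  exact (Submodule.eq_bot_iff _).1 he _ hm

/-- The transition maps of the sequence `S_{a,b}`: the map from degree `i` to degree `j`
is multiplication by `∏_{m=i}^{j-1} (-1)^m`, i.e. the composite of the maps
`(-1)^m · id` for `i ≤ m < j` (and it is zero when forced to be, i.e. when the target
component vanishes). -/
noncomputable def SabMap (a : WithBot ℤ) (b : WithTop ℤ) (i j : ℤ) :
    ↥(SabObj k a b i) →ₗ[k] ↥(SabObj k a b j) where
  toFun x := if h : a ≤ (j : WithBot ℤ) ∧ (j : WithTop ℤ) ≤ b then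
      ⟨(∏ m ∈ Finset.Ico i j, (-1 : k) ^ m) * (x : k), by
        rw [SabObj, if_pos h]; trivial⟩
    else 0
  map_add' x y := by
    by_cases h : a ≤ (j : WithBot ℤ) ∧ (j : WithTop ℤ) ≤ b
    · simp only [dif_pos h]
      ext
      push_cast
      ring
    · simp only [dif_neg h, add_zero]
  map_smul' c x := by
    by_cases h : a ≤ (j : WithBot ℤ) ∧ (j : WithTop ℤ) ≤ b
    · simp only [dif_pos h, RingHom.id_apply]
      ext
      simp [smul_eq_mul]
      ring
    · simp only [dif_neg h, smul_zero, RingHom.id_apply]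

lemma SabMap_id (a : WithBot ℤ) (b : WithTop ℤ) (i : ℤ) :
    SabMap k a b i i = LinearMap.id := by
  apply LinearMap.ext
  intro x
  by_cases h : a ≤ (i : WithBot ℤ) ∧ (i : WithTop ℤ) ≤ b
  · apply Subtype.ext
    simp [SabMap, h]
  · apply Subtype.ext
    simp [SabMap, h, SabObj_coe_eq_zero k h x]

lemma SabMap_comp (a : WithBot ℤ) (b : WithTop ℤ) {i j l : ℤ}
    (hij : i ≤ j) (hjl : j ≤ l) :
    (SabMap k a b j l).comp (SabMap k a b i j) = SabMap k a b i l := by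
  apply LinearMap.ext
  intro x
  by_cases hl : a ≤ (l : WithBot ℤ) ∧ (l : WithTop ℤ) ≤ b
  · by_cases hj : a ≤ (j : WithBot ℤ) ∧ (j : WithTop ℤ) ≤ b
    · apply Subtype.ext
      simp only [LinearMap.comp_apply, SabMap, LinearMap.coe_mk, AddHom.coe_mk,
        dif_pos hl, dif_pos hj]
      have key : (∏ m ∈ Finset.Ico i j, (-1 : k) ^ m) * (∏ m ∈ Finset.Ico j l, (-1 : k) ^ m)
          = ∏ m ∈ Finset.Ico i l, (-1 : k) ^ m := by
        rw [← Finset.prod_union (Finset.Ico_disjoint_Ico_consecutive i j l),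
          Finset.Ico_union_Ico_eq_Ico hij hjl]
      rw [← key]
      ring
    · have hi : ¬ (a ≤ (i : WithBot ℤ) ∧ (i : WithTop ℤ) ≤ b) := by
        intro hi
        exact hj ⟨le_trans hi.1 (by exact_mod_cast hij),
          le_trans (by exact_mod_cast hjl) hl.2⟩
      apply Subtype.ext
      simp [SabMap, hl, hj, SabObj_coe_eq_zero k hi x]
  · apply Subtype.ext
    simp [SabMap, hl]

/-- The sequence `S_{a,b}` for `a ∈ ℤ ∪ {−∞}` and `b ∈ ℤ ∪ {∞}`: its component in
degree `i` is `k` for `a ≤ i ≤ b` and `0` otherwise, and the transition map in degree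
`i` (within the interval) is `(-1)^i · id_k`. -/
noncomputable def Sab (a : WithBot ℤ) (b : WithTop ℤ) : SeqCat k where
  obj i := ModuleCat.of k (SabObj k a b i)
  map {i j} f := ModuleCat.ofHom (SabMap k a b i j)
  map_id i := ModuleCat.hom_ext (SabMap_id k a b i)
  map_comp {i j l} f g := ModuleCat.hom_ext (SabMap_comp k a b (leOfHom f) (leOfHom g)).symm

/-- The condition `a ≤ b` for `a ∈ ℤ ∪ {−∞}` and `b ∈ ℤ ∪ {∞}`: the interval `[a,b]`
contains some integer. -/
def SabLE (a : WithBot ℤ) (b : WithTop ℤ) : Prop :=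
  ∃ i : ℤ, a ≤ (i : WithBot ℤ) ∧ (i : WithTop ℤ) ≤ b

noncomputable section

def sgn (i j : ℤ) : k := ∏ m ∈ Finset.Ico i j, (-1 : k) ^ m

lemma sgn_ne_zero (i j : ℤ) : sgn k i j ≠ 0 :=
  Finset.prod_ne_zero_iff.2 fun m _ => zpow_ne_zero _ (neg_ne_zero.2 one_ne_zero)

lemma sgn_mul {i j l : ℤ} (hij : i ≤ j) (hjl : j ≤ l) :
    sgn k i j * sgn k j l = sgn k i l := by
  rw [sgn, sgn, sgn, ← Finset.prod_union (Finset.Ico_disjoint_Ico_consecutive i j l),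
    Finset.Ico_union_Ico_eq_Ico hij hjl]

def Fincl {i j : ℤ} (h : i ≤ j) :
    ↥(Finsupp.supported k k (Set.Iic i)) →ₗ[k] ↥(Finsupp.supported k k (Set.Iic j)) :=
  Submodule.inclusion (Finsupp.supported_mono (Set.Iic_subset_Iic.2 h))

def Fseq : SeqCat k where
  obj i := ModuleCat.of k (Finsupp.supported k k (Set.Iic i))
  map {i j} f := ModuleCat.ofHom (sgn k i j • Fincl k (leOfHom f))
  map_id i := by
    apply ModuleCat.hom_ext; apply LinearMap.ext; intro x; apply Subtype.ext
    simp only [ModuleCat.hom_ofHom, ModuleCat.hom_id, sgn, Finset.Ico_self, Finset.prod_empty,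
      one_smul]
    rfl
  map_comp {i j l} f g := by
    have hij := leOfHom f; have hjl := leOfHom g
    rw [← ModuleCat.ofHom_comp, LinearMap.smul_comp, LinearMap.comp_smul, smul_smul, mul_comm,
      sgn_mul k hij hjl]
    apply ModuleCat.hom_ext; apply LinearMap.ext; intro x; apply Subtype.ext; rfl

def totalSum : (ℤ →₀ k) →ₗ[k] k := Finsupp.lsum k fun _ => LinearMap.id

lemma SabObj_top_mem (i : ℤ) (x : k) : x ∈ SabObj k (⊥ : WithBot ℤ) (⊤ : WithTop ℤ) i := by
  rw [SabObj, if_pos ⟨bot_le, le_top⟩]; trivial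

def oneS (i : ℤ) : ↥(SabObj k (⊥ : WithBot ℤ) (⊤ : WithTop ℤ) i) :=
  ⟨1, SabObj_top_mem k i 1⟩

def piApp (i : ℤ) : ↥(Finsupp.supported k k (Set.Iic i)) →ₗ[k]
    ↥(SabObj k (⊥ : WithBot ℤ) (⊤ : WithTop ℤ) i) :=
  LinearMap.codRestrict _ ((totalSum k).comp (Submodule.subtype _))
    fun x => SabObj_top_mem k i _

lemma piApp_coe (i : ℤ) (x : ↥(Finsupp.supported k k (Set.Iic i))) :
    (piApp k i x : k) = totalSum k (x : ℤ →₀ k) := rfl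

lemma SabMap_top (i j : ℤ) (x : ↥(SabObj k (⊥ : WithBot ℤ) (⊤ : WithTop ℤ) i)) :
    (SabMap k ⊥ ⊤ i j x : k) = sgn k i j * (x : k) := by
  simp [SabMap, dif_pos (⟨bot_le, le_top⟩ : (⊥ : WithBot ℤ) ≤ (j : WithBot ℤ) ∧
    (j : WithTop ℤ) ≤ ⊤), sgn]

def piNat : Fseq k ⟶ Sab k (⊥ : WithBot ℤ) (⊤ : WithTop ℤ) where
  app i := ModuleCat.ofHom (piApp k i)
  naturality {i j} f := by
    apply ModuleCat.hom_ext; apply LinearMap.ext; intro x; apply Subtype.ext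
    have hij := leOfHom f
    show (piApp k j ((sgn k i j • Fincl k hij) x) : k) = (SabMap k ⊥ ⊤ i j (piApp k i x) : k)
    rw [SabMap_top]
    show totalSum k (sgn k i j • ((Fincl k hij x : ℤ →₀ k))) = _
    rw [map_smul, smul_eq_mul]
    rfl

instance piNat_epi : Epi (piNat k) := by
  haveI : ∀ i : ℤ, Epi ((piNat k).app i) := by
    intro i
    rw [ModuleCat.epi_iff_surjective]
    intro y
    refine ⟨⟨Finsupp.single i y.1, Finsupp.single_mem_supported k _ (Set.mem_Iic.2 le_rfl)⟩, ?_⟩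
    apply Subtype.ext
    show totalSum k (Finsupp.single i y.1) = y.1
    simp only [totalSum, Finsupp.lsum_single, LinearMap.id_apply]
  exact NatTrans.epi_of_epi_app _

end

/-- The object `S_{−∞,∞}` of `S` (the sequence that is `k` in every degree, with
transition maps `(−1)^i·id_k`) is not a projective object of `S`. -/
theorem Sbotinfty_not_projective :
    ¬ Projective (Sab k (⊥ : WithBot ℤ) (⊤ : WithTop ℤ)) := by
  intro hP
  haveI := hP
  obtain ⟨s, hs⟩ := Projective.factors (𝟙 (Sab k (⊥ : WithBot ℤ) (⊤ : WithTop ℤ))) (piNat k)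
  set v : ℤ → (ℤ →₀ k) := fun i => (s.app i (oneS k i)).1 with hv
  have hconst : ∀ i : ℤ, i ≤ 0 → v 0 = v i := by
    intro i hi
    have hnat := s.naturality (homOfLE hi)
    have h2 := congrArg (fun (g : (Sab k ⊥ ⊤).obj i ⟶ (Fseq k).obj 0) => g (oneS k i)) hnat
    simp only at h2
    change (s.app 0) ((Sab k ⊥ ⊤).map (homOfLE hi) (oneS k i))
      = (Fseq k).map (homOfLE hi) (s.app i (oneS k i)) at h2
    have hmap : (Sab k (⊥ : WithBot ℤ) (⊤ : WithTop ℤ)).map (homOfLE hi) (oneS k i)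
        = sgn k i 0 • oneS k 0 := by
      apply Subtype.ext
      show (SabMap k ⊥ ⊤ i 0 (oneS k i) : k) = _
      rw [SabMap_top]
      simp [oneS]
    rw [hmap, show (s.app 0) (sgn k i 0 • oneS k 0) = sgn k i 0 • (s.app 0) (oneS k 0) from
      map_smul (s.app 0).hom _ _] at h2
    have h3 := congrArg Subtype.val h2
    have h4 : sgn k i 0 • v 0 = sgn k i 0 • v i := h3
    exact smul_right_injective _ (sgn_ne_zero k i 0) h4
  have hv0 : v 0 = 0 := by
    ext n
    set i := min (n - 1) 0 with hidef
    have hle : i ≤ (0 : ℤ) := min_le_right _ _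
    have hlt : i < n := lt_of_le_of_lt (min_le_left _ _) (by omega)
    rw [hconst i hle, Finsupp.coe_zero, Pi.zero_apply]
    have hmem := (s.app i (oneS k i)).2
    rw [Finsupp.mem_supported] at hmem
    by_contra hne
    have hn := hmem (Finsupp.mem_support_iff.2 hne)
    rw [Set.mem_Iic] at hn
    omega
  have hid : piApp k 0 (s.app 0 (oneS k 0)) = oneS k 0 := by
    have happ := congrArg (fun t => NatTrans.app t 0) hs
    rw [NatTrans.comp_app, NatTrans.id_app] at happ
    have h := congrArg (fun (g : (Sab k ⊥ ⊤).obj 0 ⟶ (Sab k ⊥ ⊤).obj 0) => g (oneS k 0)) happ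
    simp only at h
    change piApp k 0 (s.app 0 (oneS k 0)) = oneS k 0 at h
    exact h
  have h1 : totalSum k (v 0) = 1 := congrArg Subtype.val hid
  rw [hv0, map_zero] at h1
  exact one_ne_zero h1.symm
end

section
/- For every m ∈ ℤ ∪ {−∞}, every nonzero subobject of S_{m,∞} in S is either S_{m,∞} itself or equal to the canonical subobject of S_{m,∞} consisting of the components in degrees ≥ n (which is isomorphic to S_{n,∞}) for some integer n ≥ m. -/
open CategoryTheory CategoryTheory.Limits

set_option linter.unusedVariables false

variable {k : Type} [Field k]

variable (k)

section Aux

variable {k}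

lemma SabObj_top {m : WithBot ℤ} {i : ℤ} (hmi : m ≤ (i : WithBot ℤ)) :
    SabObj k m (⊤ : WithTop ℤ) i = ⊤ := if_pos ⟨hmi, le_top⟩

lemma Sab_range_bot_or_top {m : WithBot ℤ} {U : SeqCat k}
    (f : U ⟶ Sab k m (⊤ : WithTop ℤ)) (i : ℤ) :
    LinearMap.range (f.app i).hom = ⊥ ∨ LinearMap.range (f.app i).hom = ⊤ := by
  by_cases hmi : m ≤ (i : WithBot ℤ)
  · have he : SabObj k m (⊤ : WithTop ℤ) i = ⊤ := SabObj_top hmi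
    have hk : IsSimpleModule k k := isSimpleModule_self_iff_isUnit.2
      ⟨inferInstance, fun x hx => isUnit_iff_ne_zero.2 hx⟩
    have hs : IsSimpleModule k ↥((Sab k m (⊤ : WithTop ℤ)).obj i) :=
      IsSimpleModule.congr
        (((LinearEquiv.ofEq _ _ he).trans Submodule.topEquiv :
          ↥(SabObj k m (⊤ : WithTop ℤ) i) ≃ₗ[k] k))
    exact eq_bot_or_eq_top _
  · left
    rw [eq_bot_iff]
    intro x _
    rw [Submodule.mem_bot]
    exact Subtype.ext (SabObj_coe_eq_zero k (fun h => hmi h.1) x)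

lemma SabMap_succ_surj {m : WithBot ℤ} {i : ℤ} (hmi : m ≤ (i : WithBot ℤ)) :
    Function.Surjective (SabMap k m (⊤ : WithTop ℤ) i (i + 1)) := by
  intro y
  have hsrc : SabObj k m (⊤ : WithTop ℤ) i = ⊤ := SabObj_top hmi
  have hmi1 : m ≤ ((i + 1 : ℤ) : WithBot ℤ) :=
    le_trans hmi (by exact_mod_cast (by omega : i ≤ i + 1))
  have hne : ((-1 : k) ^ i) ≠ 0 := zpow_ne_zero i (by norm_num)
  refine ⟨⟨((-1 : k) ^ i)⁻¹ * (y : k), by rw [hsrc]; trivial⟩, ?_⟩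
  apply Subtype.ext
  simp only [SabMap, LinearMap.coe_mk, AddHom.coe_mk]
  rw [dif_pos (show m ≤ ((i + 1 : ℤ) : WithBot ℤ) ∧
      (((i + 1 : ℤ) : ℤ) : WithTop ℤ) ≤ (⊤ : WithTop ℤ) from ⟨hmi1, le_top⟩)]
  have hprod : (∏ n ∈ Finset.Ico i (i + 1), (-1 : k) ^ n) = (-1 : k) ^ i := by
    have hset : Finset.Ico i (i + 1) = {i} := by
      ext n
      simp only [Finset.mem_Ico, Finset.mem_singleton]
      omega
    rw [hset, Finset.prod_singleton]
  show (∏ n ∈ Finset.Ico i (i + 1), (-1 : k) ^ n) * (((-1 : k) ^ i)⁻¹ * (y : k)) = (y : k)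
  rw [hprod, mul_inv_cancel_left₀ hne]

lemma Sab_range_step {m : WithBot ℤ} {U : SeqCat k}
    (f : U ⟶ Sab k m (⊤ : WithTop ℤ)) {i : ℤ} (hmi : m ≤ (i : WithBot ℤ))
    (hr : LinearMap.range (f.app i).hom = ⊤) :
    LinearMap.range (f.app (i + 1)).hom = ⊤ := by
  rw [eq_top_iff]
  rintro y -
  obtain ⟨x, hx⟩ := SabMap_succ_surj hmi y
  have hx' : x ∈ LinearMap.range (f.app i).hom :=
    (Submodule.eq_top_iff'.1 hr) x
  obtain ⟨u, hu⟩ := hx'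
  refine ⟨(U.map (homOfLE (by omega : i ≤ i + 1))).hom u, ?_⟩
  have hnat := congrArg (fun (g : U.obj i ⟶ (Sab k m (⊤ : WithTop ℤ)).obj (i+1)) => g.hom u)
    (f.naturality (homOfLE (by omega : i ≤ i + 1)))
  simp only [ModuleCat.hom_comp, LinearMap.comp_apply] at hnat
  rw [hnat]
  show SabMap k m (⊤ : WithTop ℤ) i (i + 1) ((f.app i).hom u) = y
  rw [hu, hx]

lemma Sab_range_mono {m : WithBot ℤ} {U : SeqCat k}
    (f : U ⟶ Sab k m (⊤ : WithTop ℤ)) {a : ℤ} (hma : m ≤ (a : WithBot ℤ))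
    (hra : LinearMap.range (f.app a).hom = ⊤) {b : ℤ} (hab : a ≤ b) :
    LinearMap.range (f.app b).hom = ⊤ := by
  exact Int.le_induction hra
    (fun n hn ih => Sab_range_step f (le_trans hma (WithBot.coe_le_coe.2 hn)) ih) b hab

end Aux

/-- For every `m ∈ ℤ ∪ {−∞}`, every nonzero subobject of `S_{m,∞}` in `S` (given by a
monomorphism `f : U ⟶ S_{m,∞}`) is either `S_{m,∞}` itself or equal to the canonical
subobject of `S_{m,∞}` consisting of the components in degrees `≥ n` (which is isomorphic
to `S_{n,∞}`) for some integer `n ≥ m`; here the subobject is identified through the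
componentwise ranges of `f`. -/
theorem subobject_of_Sminfty (m : WithBot ℤ) (U : SeqCat k)
    (f : U ⟶ Sab k m (⊤ : WithTop ℤ)) (hf : Mono f) (hU : ¬ IsZero U) :
    (∀ i : ℤ, LinearMap.range (f.app i).hom = ⊤) ∨
      ∃ n : ℤ, m ≤ (n : WithBot ℤ) ∧
        (∀ i : ℤ, LinearMap.range (f.app i).hom = if n ≤ i then ⊤ else ⊥) := by
  classical
  have hinj : ∀ i : ℤ, Function.Injective (f.app i).hom := by
    intro i
    rw [← ModuleCat.mono_iff_injective]
    exact ((NatTrans.mono_iff_mono_app f).1 hf) i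
  by_cases hall : ∀ i : ℤ, m ≤ (i : WithBot ℤ) → LinearMap.range (f.app i).hom = ⊤
  · left
    intro i
    by_cases hmi : m ≤ (i : WithBot ℤ)
    · exact hall i hmi
    · rw [eq_top_iff]
      rintro x -
      have hx0 : x = 0 := Subtype.ext (SabObj_coe_eq_zero k (fun h => hmi h.1) x)
      exact hx0 ▸ Submodule.zero_mem _
  · right
    push_neg at hall
    obtain ⟨i0, hmi0, hr0⟩ := hall
    have hr0' : LinearMap.range (f.app i0).hom = ⊥ :=
      (Sab_range_bot_or_top f i0).resolve_right hr0
    obtain ⟨i1, hU1⟩ : ∃ i : ℤ, ¬ IsZero (U.obj i) := by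
      by_contra h
      push_neg at h
      exact hU (Functor.isZero U h)
    have hnt : Nontrivial (U.obj i1) := by
      by_contra hnt
      rw [not_nontrivial_iff_subsingleton] at hnt
      exact hU1 (ModuleCat.isZero_of_subsingleton _)
    obtain ⟨u, hu⟩ := exists_ne (0 : U.obj i1)
    have hfu : (f.app i1).hom u ≠ 0 := fun h => hu (hinj i1 (by rw [h, map_zero]))
    have hmi1 : m ≤ (i1 : WithBot ℤ) := by
      by_contra hmi1
      exact hfu (Subtype.ext (SabObj_coe_eq_zero k (fun h => hmi1 h.1) _))
    have hr1 : LinearMap.range (f.app i1).hom = ⊤ := by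
      refine (Sab_range_bot_or_top f i1).resolve_left (fun h => hfu ?_)
      have hm : (f.app i1).hom u ∈ LinearMap.range (f.app i1).hom := ⟨u, rfl⟩
      rwa [h, Submodule.mem_bot] at hm
    have hbdd : ∃ b : ℤ, ∀ z : ℤ,
        (m ≤ (z : WithBot ℤ) ∧ LinearMap.range (f.app z).hom = ⊤) → b ≤ z := by
      refine ⟨i0 + 1, fun z hz => ?_⟩
      by_contra hzb
      exact hr0 (Sab_range_mono f hz.1 hz.2 (by omega))
    obtain ⟨n, hn, hleast⟩ := Int.exists_least_of_bdd hbdd ⟨i1, hmi1, hr1⟩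
    refine ⟨n, hn.1, fun i => ?_⟩
    by_cases hni : n ≤ i
    · rw [if_pos hni]
      exact Sab_range_mono f hn.1 hn.2 hni
    · rw [if_neg hni]
      by_cases hmi : m ≤ (i : WithBot ℤ)
      · refine (Sab_range_bot_or_top f i).resolve_right (fun h => ?_)
        exact hni (hleast i ⟨hmi, h⟩)
      · rw [eq_bot_iff]
        intro x _
        rw [Submodule.mem_bot]
        exact Subtype.ext (SabObj_coe_eq_zero k (fun h => hmi h.1) x)
end

section
/- The object T^{≤0} of S is not completely decomposable: T^{≤0} is not isomorphic to any coproduct of objects of the form S_{a,b} with a ∈ ℤ ∪ {−∞}, b ∈ ℤ ∪ {∞}, a ≤ b. -/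
open CategoryTheory CategoryTheory.Limits

set_option linter.unusedVariables false

variable {k : Type} [Field k]

variable (k)

/-- The right-shift operator on `k^ℕ`: `(c_0, c_1, …) ↦ (0, c_0, c_1, …)`. -/
def rightShift : (ℕ → k) →ₗ[k] (ℕ → k) where
  toFun x := fun m => if m = 0 then 0 else x (m - 1)
  map_add' x y := by
    funext m
    by_cases h : m = 0 <;> simp [h]
  map_smul' c x := by
    funext m
    by_cases h : m = 0 <;> simp [h]

/-- The component in degree `i` of the object `T^{≤0}`, as a submodule of `k^ℕ`:
it is all of `k^ℕ` for `i ≤ 0` and `0` for `i > 0`. -/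
def TleObj (i : ℤ) : Submodule k (ℕ → k) :=
  if i ≤ 0 then ⊤ else ⊥

/-- The transition maps of `T^{≤0}`: from degree `i` to degree `j ≥ i` (within degrees
`≤ 0`) it is the `(j−i)`-fold right-shift `(c_0, c_1, …) ↦ (0, …, 0, c_0, c_1, …)`,
and `0` into positive degrees. -/
def TleMap (i j : ℤ) : ↥(TleObj k i) →ₗ[k] ↥(TleObj k j) where
  toFun x :=
    if h : j ≤ 0 then
      ⟨(rightShift k ^ (j - i).toNat) (x : ℕ → k), by rw [TleObj, if_pos h]; trivial⟩
    else 0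
  map_add' x y := by
    by_cases h : j ≤ 0
    · simp only [dif_pos h]
      ext
      simp
    · simp only [dif_neg h, add_zero]
  map_smul' c x := by
    by_cases h : j ≤ 0
    · simp only [dif_pos h, RingHom.id_apply]
      ext
      simp
    · simp only [dif_neg h, smul_zero, RingHom.id_apply]

lemma TleObj_coe_eq_zero {i : ℤ} (h : ¬ i ≤ 0) (x : ↥(TleObj k i)) : (x : ℕ → k) = 0 := by
  have hm := x.2
  have he : TleObj k i = ⊥ := if_neg h
  exact (Submodule.eq_bot_iff _).1 he _ hm

lemma TleMap_id (i : ℤ) : TleMap k i i = LinearMap.id := by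
  apply LinearMap.ext
  intro x
  by_cases h : i ≤ 0
  · apply Subtype.ext
    simp [TleMap, h]
  · apply Subtype.ext
    simp [TleMap, h, TleObj_coe_eq_zero k h x]

lemma TleMap_comp {i j l : ℤ} (hij : i ≤ j) (hjl : j ≤ l) :
    (TleMap k j l).comp (TleMap k i j) = TleMap k i l := by
  apply LinearMap.ext
  intro x
  by_cases hl : l ≤ 0
  · have hj : j ≤ 0 := le_trans hjl hl
    apply Subtype.ext
    simp only [LinearMap.comp_apply, TleMap, LinearMap.coe_mk, AddHom.coe_mk,
      dif_pos hl, dif_pos hj]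
    have hn : (l - j).toNat + (j - i).toNat = (l - i).toNat := by omega
    rw [← hn, pow_add]
    simp [Module.End.mul_apply]
  · apply Subtype.ext
    simp [TleMap, hl]

/-- The object `T^{≤0}` of `S`: its component in degree `i` is `k^ℕ` for `i ≤ 0` and `0`
for `i > 0`, and its transition maps are the right-shift `(c_0, c_1, …) ↦ (0, c_0, c_1, …)`
for `i < 0` and the zero map for `i ≥ 0`. -/
def Tle : SeqCat k where
  obj i := ModuleCat.of k (TleObj k i)
  map {i j} f := ModuleCat.ofHom (TleMap k i j)
  map_id i := ModuleCat.hom_ext (TleMap_id k i)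
  map_comp {i j l} f g := ModuleCat.hom_ext (TleMap_comp k (leOfHom f) (leOfHom g)).symm


/-! ### Auxiliary material for the proof -/

noncomputable section Aux

open DirectSum

lemma mem_SabObj_of (aj : WithBot ℤ) (bj : WithTop ℤ) {i : ℤ}
    (h : aj ≤ (i : WithBot ℤ) ∧ (i : WithTop ℤ) ≤ bj) (c : k) : c ∈ SabObj k aj bj i := by
  simp only [SabObj, if_pos h]; trivial

lemma SabMap_apply_of_pos (aj : WithBot ℤ) (bj : WithTop ℤ) {i i' : ℤ}
    (h : aj ≤ (i' : WithBot ℤ) ∧ (i' : WithTop ℤ) ≤ bj) (x : ↥(SabObj k aj bj i)) :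
    SabMap k aj bj i i' x
      = ⟨(∏ m ∈ Finset.Ico i i', (-1 : k) ^ m) * (x : k), mem_SabObj_of k aj bj h _⟩ := by
  simp only [SabMap, LinearMap.coe_mk, AddHom.coe_mk, dif_pos h]

lemma SabMap_apply_coe_zero (aj : WithBot ℤ) (bj : WithTop ℤ) {i i' : ℤ}
    {x : ↥(SabObj k aj bj i)} (hx : (x : k) = 0) :
    SabMap k aj bj i i' x = 0 := by
  by_cases h : aj ≤ (i' : WithBot ℤ) ∧ (i' : WithTop ℤ) ≤ bj
  · rw [SabMap_apply_of_pos k aj bj h]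
    exact Subtype.ext (by simp [hx])
  · simp only [SabMap, LinearMap.coe_mk, AddHom.coe_mk, dif_neg h]

variable {ι : Type} [DecidableEq ι] (a : ι → WithBot ℤ) (b : ι → WithTop ℤ)

/-- The transition maps of the direct sum. -/
def DSumMap (i i' : ℤ) :
    (⨁ j, ↥(SabObj k (a j) (b j) i)) →ₗ[k] (⨁ j, ↥(SabObj k (a j) (b j) i')) :=
  DirectSum.toModule k ι _ fun j =>
    (DirectSum.lof k ι (fun l => ↥(SabObj k (a l) (b l) i')) j).comp (SabMap k (a j) (b j) i i')

lemma DSumMap_lof (i i' : ℤ) (j : ι) (x : ↥(SabObj k (a j) (b j) i)) :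
    DSumMap k a b i i' (DirectSum.lof k ι (fun l => ↥(SabObj k (a l) (b l) i)) j x)
      = DirectSum.lof k ι (fun l => ↥(SabObj k (a l) (b l) i')) j
          (SabMap k (a j) (b j) i i' x) := by
  rw [DSumMap, DirectSum.toModule_lof, LinearMap.comp_apply]

/-- The explicit direct sum of the sequences `S_{a j, b j}`, as an object of `S`. -/
def DSum : SeqCat k where
  obj i := ModuleCat.of k (⨁ j, ↥(SabObj k (a j) (b j) i))
  map {i i'} _ := ModuleCat.ofHom (DSumMap k a b i i')
  map_id i := ModuleCat.hom_ext <| DirectSum.linearMap_ext k fun j => LinearMap.ext fun x => by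
    show DSumMap k a b i i (DirectSum.lof k ι (fun l => ↥(SabObj k (a l) (b l) i)) j x)
      = DirectSum.lof k ι (fun l => ↥(SabObj k (a l) (b l) i)) j x
    rw [DSumMap_lof, SabMap_id]
    rfl
  map_comp {i i' i''} f g := ModuleCat.hom_ext <| DirectSum.linearMap_ext k fun j => LinearMap.ext fun x => by
    show DSumMap k a b i i'' (DirectSum.lof k ι (fun l => ↥(SabObj k (a l) (b l) i)) j x)
      = DSumMap k a b i' i''
          (DSumMap k a b i i' (DirectSum.lof k ι (fun l => ↥(SabObj k (a l) (b l) i)) j x))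
    rw [DSumMap_lof, DSumMap_lof, DSumMap_lof,
      ← SabMap_comp k (a j) (b j) (leOfHom f) (leOfHom g), LinearMap.comp_apply]

lemma DSum_map {i i' : ℤ} (f : i ⟶ i') : ((DSum k a b).map f).hom = DSumMap k a b i i' := rfl

lemma DSum_map_lof {i i' : ℤ} (f : i ⟶ i') (j : ι) (x : ↥(SabObj k (a j) (b j) i)) :
    (DSum k a b).map f (DirectSum.lof k ι (fun l => ↥(SabObj k (a l) (b l) i)) j x)
      = DirectSum.lof k ι (fun l => ↥(SabObj k (a l) (b l) i')) j
          (SabMap k (a j) (b j) i i' x) :=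
  DSumMap_lof k a b i i' j x

/-- The inclusion of the `j`-th summand into `DSum`. -/
def DSumIncl (j : ι) : Sab k (a j) (b j) ⟶ DSum k a b where
  app i := ModuleCat.ofHom (DirectSum.lof k ι (fun l => ↥(SabObj k (a l) (b l) i)) j)
  naturality {i i'} f := ModuleCat.hom_ext <| LinearMap.ext fun x => by
    show DirectSum.lof k ι (fun l => ↥(SabObj k (a l) (b l) i')) j
          (SabMap k (a j) (b j) i i' x)
      = DSumMap k a b i i' (DirectSum.lof k ι (fun l => ↥(SabObj k (a l) (b l) i)) j x)
    exact (DSumMap_lof k a b i i' j x).symm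

/-- The cofan exhibiting `DSum` as a coproduct of the `S_{a j, b j}`. -/
def DSumCofan : Cofan (fun j : ι => Sab k (a j) (b j)) :=
  Cofan.mk (DSum k a b) (DSumIncl k a b)

/-- The canonical map out of `DSum` induced by a cofan. -/
def DSumDesc (t : Cofan (fun j : ι => Sab k (a j) (b j))) : DSum k a b ⟶ t.pt where
  app i := ModuleCat.ofHom (DirectSum.toModule k ι (t.pt.obj i) fun j => ((t.inj j).app i).hom)
  naturality {i i'} f := ModuleCat.hom_ext <| DirectSum.linearMap_ext k fun j => LinearMap.ext fun x => by
    show (DirectSum.toModule k ι (t.pt.obj i') fun l => ((t.inj l).app i').hom)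
          (DSumMap k a b i i' (DirectSum.lof k ι (fun l => ↥(SabObj k (a l) (b l) i)) j x))
      = (t.pt.map f).hom ((DirectSum.toModule k ι (t.pt.obj i) fun l => ((t.inj l).app i).hom)
          (DirectSum.lof k ι (fun l => ↥(SabObj k (a l) (b l) i)) j x))
    rw [DSumMap_lof]
    erw [DirectSum.toModule_lof, DirectSum.toModule_lof]
    exact congrArg (fun φ => ModuleCat.Hom.hom φ x) ((t.inj j).naturality f)

/-- The cofan `DSumCofan` is a colimit. -/
def DSumIsColimit : IsColimit (DSumCofan k a b) :=
  mkCofanColimit _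
    (fun t => DSumDesc k a b t)
    (fun t j => by
      apply NatTrans.ext
      funext i
      apply ModuleCat.hom_ext
      apply LinearMap.ext
      intro x
      exact DirectSum.toModule_lof (R := k)
        (φ := fun l => (((t.inj l).app i).hom : ↥(SabObj k (a l) (b l) i) →ₗ[k] ↑(t.pt.obj i))) j x)
    (fun t m hm => by
      apply NatTrans.ext
      funext i
      apply ModuleCat.hom_ext
      refine DirectSum.linearMap_ext k fun j => LinearMap.ext fun x => ?_
      refine Eq.trans ?_ (DirectSum.toModule_lof (R := k)
        (φ := fun l => (((t.inj l).app i).hom : ↥(SabObj k (a l) (b l) i) →ₗ[k] ↑(t.pt.obj i))) j x).symm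
      exact congrArg (fun φ => ModuleCat.Hom.hom φ x) (congrFun (congrArg NatTrans.app (hm j)) i))

lemma rightShift_pow_apply (n : ℕ) (x : ℕ → k) (m : ℕ) :
    ((rightShift k ^ n) x) m = if m < n then 0 else x (m - n) := by
  induction n generalizing m with
  | zero => simp
  | succ n ih =>
    rw [pow_succ', Module.End.mul_apply]
    show (if m = 0 then 0 else ((rightShift k ^ n) x) (m - 1)) = _
    rcases Nat.eq_zero_or_pos m with hm | hm
    · subst hm
      simp
    · have hm' : ¬ m = 0 := by omega
      rw [if_neg hm', ih]
      by_cases h1 : m - 1 < n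
      · rw [if_pos h1, if_pos (by omega)]
      · rw [if_neg h1, if_neg (by omega)]
        congr 1
        omega

lemma TleMap_eq_zero_iff {i i' : ℤ} (h : i' ≤ 0) (x : ↥(TleObj k i)) :
    TleMap k i i' x = 0 ↔ x = 0 := by
  constructor
  · intro hx
    have h1 : (rightShift k ^ (i' - i).toNat) (x : ℕ → k) = 0 := by
      have := congrArg Subtype.val hx
      simpa [TleMap, dif_pos h] using this
    apply Subtype.ext
    funext m
    have := congrFun h1 (m + (i' - i).toNat)
    rw [rightShift_pow_apply, if_neg (by omega)] at this
    simpa using this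
  · rintro rfl
    simp

lemma mem_TleObj_of {i : ℤ} (h : i ≤ 0) (y : ℕ → k) : y ∈ TleObj k i := by
  simp only [TleObj, if_pos h]; trivial

lemma mem_range_TleMap_iff (n : ℕ) (x : ↥(TleObj k 0)) :
    x ∈ LinearMap.range (TleMap k (-(n : ℤ)) 0) ↔ ∀ m < n, (x : ℕ → k) m = 0 := by
  have htn : ((0 : ℤ) - (-(n : ℤ))).toNat = n := by omega
  constructor
  · rintro ⟨y, rfl⟩ m hm
    have : (TleMap k (-(n : ℤ)) 0 y : ℕ → k) = (rightShift k ^ n) (y : ℕ → k) := by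
      simp [TleMap, dif_pos (le_refl (0 : ℤ)), htn]
    rw [this, rightShift_pow_apply, if_pos hm]
  · intro hx
    set y : ↥(TleObj k (-(n : ℤ))) :=
      ⟨fun m => (x : ℕ → k) (m + n), mem_TleObj_of k (by omega) _⟩ with hydef
    refine ⟨y, ?_⟩
    apply Subtype.ext
    have : (TleMap k (-(n : ℤ)) 0 y : ℕ → k)
        = (rightShift k ^ n) (fun m => (x : ℕ → k) (m + n)) := by
      simp [TleMap, dif_pos (le_refl (0 : ℤ)), htn, hydef]
    rw [this]
    funext m
    rw [rightShift_pow_apply]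
    by_cases hm : m < n
    · rw [if_pos hm, (hx m hm)]
    · rw [if_neg hm]
      show (x : ℕ → k) (m - n + n) = (x : ℕ → k) m
      rw [Nat.sub_add_cancel (Nat.le_of_not_lt hm)]

/-- The heart of the proof: `T^{≤0}` is not isomorphic to the direct sum of the
`S_{a j, b j}`. -/
lemma no_iso_DSum (hab : ∀ j, SabLE (a j) (b j)) (Φ : Tle k ≅ DSum k a b) : False := by
  -- basic consequences of the isomorphism
  have hψφ : ∀ (i : ℤ) (x : ↥(TleObj k i)), Φ.inv.app i (Φ.hom.app i x) = x := fun i x =>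
    ConcreteCategory.congr_hom (Φ.hom_inv_id_app i) x
  have hφψ : ∀ (i : ℤ) (x : ⨁ j, ↥(SabObj k (a j) (b j) i)),
      Φ.hom.app i (Φ.inv.app i x) = x := fun i x =>
    ConcreteCategory.congr_hom (Φ.inv_hom_id_app i) x
  have hnat : ∀ (i i' : ℤ) (h : i ≤ i') (x : ↥(TleObj k i)),
      Φ.hom.app i' (TleMap k i i' x) = DSumMap k a b i i' (Φ.hom.app i x) :=
    fun i i' h x => ConcreteCategory.congr_hom (Φ.hom.naturality (homOfLE h)) x
  have hnatinv : ∀ (i i' : ℤ) (h : i ≤ i') (x : ⨁ j, ↥(SabObj k (a j) (b j) i)),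
      Φ.inv.app i' (DSumMap k a b i i' x) = TleMap k i i' (Φ.inv.app i x) :=
    fun i i' h x => ConcreteCategory.congr_hom (Φ.inv.naturality (homOfLE h)) x
  have hone : ∀ (i : ℤ) (j : ι) (h : (1 : k) ∈ SabObj k (a j) (b j) i),
      (⟨1, h⟩ : ↥(SabObj k (a j) (b j) i)) ≠ 0 :=
    fun i j h hc => one_ne_zero (congrArg Subtype.val hc)
  -- components of DSum in positive degrees vanish
  have hDzero : ∀ (i : ℤ), ¬ i ≤ 0 → ∀ x : ⨁ j, ↥(SabObj k (a j) (b j) i), x = 0 := by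
    intro i hi x
    have h1 : Φ.inv.app i x = 0 := Subtype.ext (TleObj_coe_eq_zero k hi _)
    rw [← hφψ i x, h1]
    exact map_zero _
  have lof_ne_zero : ∀ (i : ℤ) (j : ι) (x : ↥(SabObj k (a j) (b j) i)), x ≠ 0 →
      DirectSum.lof k ι (fun l => ↥(SabObj k (a l) (b l) i)) j x ≠ 0 := by
    intro i j x hx h
    exact hx (by simpa [DirectSum.lof_apply] using congrArg (fun z => z j) h)
  -- b j < 1 for all j
  have hbtop : ∀ j, ¬ ((1 : ℤ) : WithTop ℤ) ≤ b j := by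
    intro j hbj
    obtain ⟨i₀, hi₀a, hi₀b⟩ := hab j
    set i := max i₀ 1 with hi
    have hib : (i : WithTop ℤ) ≤ b j := by
      rcases le_or_gt i₀ 1 with h1 | h1
      · have : i = 1 := by omega
        rw [this]; exact hbj
      · have : i = i₀ := by omega
        rw [this]; exact hi₀b
    have hia : a j ≤ (i : WithBot ℤ) :=
      le_trans hi₀a (by exact_mod_cast le_max_left i₀ 1)
    exact lof_ne_zero i j _ (hone i j (mem_SabObj_of k (a j) (b j) ⟨hia, hib⟩ 1))
      (hDzero i (by omega) _)
  -- a j ≤ 0 for all j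
  have ha0 : ∀ j, a j ≤ ((0 : ℤ) : WithBot ℤ) := by
    intro j
    obtain ⟨i₀, hi₀a, hi₀b⟩ := hab j
    have : i₀ ≤ 0 := by
      by_contra h
      exact hbtop j (le_trans (by exact_mod_cast (by omega : (1:ℤ) ≤ i₀)) hi₀b)
    exact le_trans hi₀a (by exact_mod_cast this)
  -- 0 ≤ b j for all j
  have hb0 : ∀ j, ((0 : ℤ) : WithTop ℤ) ≤ b j := by
    intro j
    by_contra h
    obtain ⟨i₀, hi₀a, hi₀b⟩ := hab j
    have hlt : b j < ((0 : ℤ) : WithTop ℤ) := not_le.mp h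
    obtain ⟨m, hm⟩ := WithTop.ne_top_iff_exists.mp (ne_top_of_lt hlt)
    have hm0 : m ≤ -1 := by
      rw [← hm] at hlt
      have hm1 : m < 0 := by exact_mod_cast hlt
      omega
    have hi₀m : i₀ ≤ m := by
      rw [← hm] at hi₀b
      exact_mod_cast hi₀b
    have hmem : a j ≤ ((m : ℤ) : WithBot ℤ) ∧ ((m : ℤ) : WithTop ℤ) ≤ b j :=
      ⟨le_trans hi₀a (by exact_mod_cast hi₀m), le_of_eq hm⟩
    set x : ↥(SabObj k (a j) (b j) m) := ⟨1, mem_SabObj_of k _ _ hmem 1⟩ with hxdef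
    have hx : x ≠ 0 := hone m j _
    have hmap0 : SabMap k (a j) (b j) m (m + 1) x = 0 := by
      have hc : ¬ (a j ≤ ((m + 1 : ℤ) : WithBot ℤ) ∧ ((m + 1 : ℤ) : WithTop ℤ) ≤ b j) := by
        rintro ⟨-, hc2⟩
        rw [← hm] at hc2
        have : (m : ℤ) + 1 ≤ m := by exact_mod_cast hc2
        omega
      simp only [SabMap, LinearMap.coe_mk, AddHom.coe_mk, dif_neg hc]
    have hv : DSumMap k a b m (m + 1)
        (DirectSum.lof k ι (fun l => ↥(SabObj k (a l) (b l) m)) j x) = 0 := by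
      rw [DSumMap_lof, hmap0, map_zero]
    have h2 := hnatinv m (m + 1) (by omega)
      (DirectSum.lof k ι (fun l => ↥(SabObj k (a l) (b l) m)) j x)
    rw [hv] at h2
    replace h2 := (map_zero (ConcreteCategory.hom (Φ.inv.app (m + 1)))).symm.trans h2
    have h0 : Φ.inv.app m (DirectSum.lof k ι (fun l => ↥(SabObj k (a l) (b l) m)) j x)
        = 0 := ((TleMap_eq_zero_iff k (by omega)) _).mp h2.symm
    have h3 := hφψ m (DirectSum.lof k ι (fun l => ↥(SabObj k (a l) (b l) m)) j x)
    rw [h0] at h3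
    replace h3 := (map_zero (ConcreteCategory.hom (Φ.hom.app m))).symm.trans h3
    exact lof_ne_zero m j x hx h3.symm
  -- the distinguished generators in degree 0
  have h0mem : ∀ j, ((1 : k) ∈ SabObj k (a j) (b j) 0) := fun j =>
    mem_SabObj_of k _ _ ⟨ha0 j, hb0 j⟩ 1
  set e0 : ∀ j, ↥(SabObj k (a j) (b j) 0) := fun j => ⟨1, h0mem j⟩ with he0
  set ee : ι → ⨁ j, ↥(SabObj k (a j) (b j) 0) := fun j =>
    DirectSum.lof k ι (fun l => ↥(SabObj k (a l) (b l) 0)) j (e0 j) with hee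
  -- the degree-0 components of the isomorphism, with their honest types
  let ψ0 : (⨁ j, ↥(SabObj k (a j) (b j) 0)) →ₗ[k] ↥(TleObj k 0) := (Φ.inv.app 0).hom
  let φ0 : ↥(TleObj k 0) →ₗ[k] (⨁ j, ↥(SabObj k (a j) (b j) 0)) := (Φ.hom.app 0).hom
  -- components of the image of the transition map from degree -n
  have hrange : ∀ (n : ℕ) (u : ⨁ j, ↥(SabObj k (a j) (b j) (-(n : ℤ)))) (j : ι),
      ¬ a j ≤ ((-(n : ℤ) : ℤ) : WithBot ℤ) →
      (DSumMap k a b (-(n : ℤ)) 0 u) j = 0 := by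
    intro n u j hj
    induction u using DirectSum.induction_on with
    | zero => rw [map_zero]; simp
    | of l x =>
      rw [← DirectSum.lof_eq_of (R := k), DSumMap_lof]
      rcases eq_or_ne l j with rfl | hlj
      · have hx : (x : k) = 0 :=
          SabObj_coe_eq_zero k (fun hc => hj hc.1) x
        rw [SabMap_apply_coe_zero k _ _ hx, map_zero]
        simp
      · rw [DirectSum.lof_eq_of]
        exact DirectSum.of_eq_of_ne _ _ _ hlj.symm
    | add u v hu hv =>
      rw [map_add, DirectSum.add_apply, hu, hv, add_zero]
  -- each set {j | ¬ a j ≤ -n} is countable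
  have hIn : ∀ n : ℕ, Set.Countable {j : ι | ¬ a j ≤ ((-(n : ℤ) : ℤ) : WithBot ℤ)} := by
    intro n
    set F := {j : ι | ¬ a j ≤ ((-(n : ℤ) : ℤ) : WithBot ℤ)} with hF
    set g : F → (Fin n → k) := fun j => fun t => ((ψ0 (ee j.1) : ↥(TleObj k 0)) : ℕ → k) t.1
      with hg
    have hli : LinearIndependent k g := by
      rw [linearIndependent_iff']
      intro s c hsum j hj
      set w : ⨁ l, ↥(SabObj k (a l) (b l) 0) := ∑ l ∈ s, c l • ee l.1 with hw
      -- ψ0 w has vanishing first n coordinates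
      have hψw : ∀ m < n, ((ψ0 w : ↥(TleObj k 0)) : ℕ → k) m = 0 := by
        intro m hm
        have h1 : ψ0 w = ∑ l ∈ s, c l • ψ0 (ee l.1) := by
          rw [hw, map_sum]
          exact Finset.sum_congr rfl fun l _ => map_smul _ _ _
        have h2 := congrFun hsum ⟨m, hm⟩
        rw [Finset.sum_apply] at h2
        rw [h1, Submodule.coe_sum, Finset.sum_apply]
        refine Eq.trans ?_ h2
        refine Finset.sum_congr rfl fun l _ => ?_
        simp [hg]
      have hmem := (mem_range_TleMap_iff k n (ψ0 w)).mpr hψw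
      obtain ⟨y, hy⟩ := hmem
      -- hence w is in the range of the transition map of DSum
      have hwr : w = DSumMap k a b (-(n : ℤ)) 0 (Φ.hom.app (-(n : ℤ)) y) := by
        rw [← hnat _ _ (by omega : (-(n : ℤ)) ≤ 0) y, hy]
        exact (hφψ 0 w).symm
      have hwj : w j.1 = 0 := by
        rw [hwr]
        exact hrange n _ j.1 j.2
      -- extract the coefficient
      have hcj : w j.1 = c j • e0 j.1 := by
        rw [hw]
        rw [DFinsupp.finset_sum_apply]
        rw [Finset.sum_eq_single j]
        · rw [DirectSum.smul_apply]
          simp only [hee]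
          rw [DirectSum.lof_apply]
        · intro l hl hlj
          have hlj' : l.1 ≠ j.1 := fun hc => hlj (Subtype.ext hc)
          rw [DirectSum.smul_apply]
          simp only [hee]
          rw [DirectSum.lof_eq_of, DirectSum.of_eq_of_ne _ _ _ hlj'.symm, smul_zero]
        · intro hjs
          exact absurd hj hjs
      rw [hcj] at hwj
      have := congrArg Subtype.val hwj
      simpa [he0] using this
    have hcard := hli.cardinal_lift_le_rank
    rw [Cardinal.lift_id, Cardinal.lift_id, rank_fun'] at hcard
    rw [← Set.countable_coe_iff, ← Cardinal.mk_le_aleph0_iff]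
    exact le_trans hcard (le_of_lt (Cardinal.nat_lt_aleph0 _))
  -- every j lies in one of these sets
  have hcover : ∀ j : ι, ∃ n : ℕ, ¬ a j ≤ ((-(n : ℤ) : ℤ) : WithBot ℤ) := by
    intro j
    by_contra h
    push_neg at h
    -- the generator ee j is in all the images, hence zero
    have key : ∀ n : ℕ, ψ0 (ee j) ∈ LinearMap.range (TleMap k (-(n : ℤ)) 0) := by
      intro n
      have hc : (∏ m ∈ Finset.Ico (-(n : ℤ)) 0, (-1 : k) ^ m) ≠ 0 :=
        Finset.prod_ne_zero_iff.mpr fun m _ =>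
          zpow_ne_zero m (neg_ne_zero.mpr one_ne_zero)
      have hmemn : a j ≤ ((-(n : ℤ) : ℤ) : WithBot ℤ) ∧
          ((-(n : ℤ) : ℤ) : WithTop ℤ) ≤ b j :=
        ⟨h n, le_trans (by exact_mod_cast (by omega : (-(n : ℤ)) ≤ 0)) (hb0 j)⟩
      set u : ↥(SabObj k (a j) (b j) (-(n : ℤ))) :=
        ⟨(∏ m ∈ Finset.Ico (-(n : ℤ)) 0, (-1 : k) ^ m)⁻¹, mem_SabObj_of k _ _ hmemn _⟩
        with hu
      have hmap : SabMap k (a j) (b j) (-(n : ℤ)) 0 u = e0 j := by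
        rw [SabMap_apply_of_pos k _ _ ⟨ha0 j, hb0 j⟩]
        refine Subtype.ext ?_
        simp only [hu, he0]
        exact mul_inv_cancel₀ hc
      have hDu : DSumMap k a b (-(n : ℤ)) 0
          (DirectSum.lof k ι (fun l => ↥(SabObj k (a l) (b l) (-(n : ℤ)))) j u) = ee j := by
        rw [DSumMap_lof, hmap]
      refine ⟨Φ.inv.app (-(n : ℤ))
        (DirectSum.lof k ι (fun l => ↥(SabObj k (a l) (b l) (-(n : ℤ)))) j u), ?_⟩
      rw [← hnatinv _ _ (by omega : (-(n : ℤ)) ≤ 0), hDu]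
      rfl
    have hz : ψ0 (ee j) = 0 := by
      apply Subtype.ext
      funext m
      have := (mem_range_TleMap_iff k (m + 1) _).mp (key (m + 1)) m (by omega)
      simpa using this
    have h3 := hφψ 0 (ee j)
    have hz' : Φ.inv.app 0 (ee j) = 0 := hz
    rw [hz', map_zero] at h3
    exact lof_ne_zero 0 j (e0 j) (hone 0 j (h0mem j)) h3.symm
  -- hence ι is countable
  have hcount : Countable ι := by
    have huniv : (Set.univ : Set ι).Countable := by
      refine Set.Countable.mono (fun j _ => ?_) (Set.countable_iUnion hIn)
      exact Set.mem_iUnion.mpr (hcover j)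
    exact Set.countable_univ_iff.mp huniv
  -- the direct sum in degree 0 has rank at most ℵ₀
  have hspan : Submodule.span k (Set.range ee) = ⊤ := by
    rw [Submodule.eq_top_iff']
    intro x
    induction x using DirectSum.induction_on with
    | zero => exact Submodule.zero_mem _
    | of j y =>
      have hy : y = (y : k) • e0 j := Subtype.ext (by simp [he0])
      rw [← DirectSum.lof_eq_of (R := k), hy, map_smul]
      refine Submodule.smul_mem _ _ (Submodule.subset_span ⟨j, ?_⟩)
      simp only [hee]
    | add u v hu hv => exact Submodule.add_mem _ hu hv
  have hrank1 : Module.rank k (⨁ j, ↥(SabObj k (a j) (b j) 0)) ≤ Cardinal.aleph0 := by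
    calc Module.rank k (⨁ j, ↥(SabObj k (a j) (b j) 0))
        = Module.rank k ↥(⊤ : Submodule k (⨁ j, ↥(SabObj k (a j) (b j) 0))) :=
          (rank_top k _).symm
      _ = Module.rank k ↥(Submodule.span k (Set.range ee)) := by rw [hspan]
      _ ≤ Cardinal.mk (Set.range ee) := rank_span_le _
      _ ≤ Cardinal.mk ι := Cardinal.mk_range_le
      _ ≤ Cardinal.aleph0 := Cardinal.mk_le_aleph0
  -- but T^0 has rank > ℵ₀
  have hrank2 : Cardinal.aleph0 < Module.rank k ↥(TleObj k 0) := by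
    have h1 : TleObj k 0 = ⊤ := if_pos le_rfl
    have h2 : Module.rank k ↥(TleObj k 0) = Module.rank k (ℕ → k) := by
      rw [h1]; exact rank_top k _
    rw [h2, rank_fun_infinite]
    have h3 : (2 : Cardinal) ≤ Cardinal.mk k :=
      Cardinal.two_le_iff.mpr ⟨0, 1, zero_ne_one⟩
    calc Cardinal.aleph0 < 2 ^ Cardinal.aleph0 := Cardinal.cantor _
      _ ≤ Cardinal.mk k ^ Cardinal.aleph0 := Cardinal.power_le_power_right h3
      _ = Cardinal.mk (ℕ → k) := by
          rw [Cardinal.mk_arrow, Cardinal.lift_id, Cardinal.lift_id, Cardinal.mk_nat]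
  -- contradiction via the isomorphism in degree 0
  have hinj : Function.Injective φ0 := by
    intro x y hxy
    have hxy' : Φ.hom.app 0 x = Φ.hom.app 0 y := hxy
    have h1 := congrArg (Φ.inv.app 0) hxy'
    rw [hψφ 0 x, hψφ 0 y] at h1
    exact h1
  have := LinearMap.rank_le_of_injective φ0 hinj
  exact absurd (lt_of_lt_of_le hrank2 (le_trans this hrank1)) (lt_irrefl _)

end Aux

/-- The object `T^{≤0}` of `S` is not completely decomposable: it is not isomorphic to
any coproduct of objects of the form `S_{a,b}` with `a ∈ ℤ ∪ {−∞}`, `b ∈ ℤ ∪ {∞}`,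
`a ≤ b`. -/
theorem Tle_not_completely_decomposable :
    ¬ ∃ (ι : Type) (a : ι → WithBot ℤ) (b : ι → WithTop ℤ),
        (∀ j, SabLE (a j) (b j)) ∧
        Nonempty (Tle k ≅ ∐ fun j : ι => Sab k (a j) (b j)) := by
  rintro ⟨ι, a, b, hab, ⟨e⟩⟩
  classical
  exact no_iso_DSum k a b hab
    (e ≪≫ colimit.isoColimitCocone ⟨DSumCofan k a b, DSumIsColimit k a b⟩)
end
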